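/- For all integers n ≥ 0, \overline{pl}_4(4n+1) + \overline{pl}_4(4n+2) + \overline{pl}_4(4n+3) ≡ 0 (mod 4). -/

import Mathlib

/-- `plBar k n` counts 2k-tuples `(D₁,…,D_k,P₁,…,P_k)` where `D_i` is a partition
into distinct parts all of size at least `i`, `P_i` is a partition with all parts
of size at least `i` (here `i` ranges over `1,…,k`, encoded by `Fin k` shifted by one),
and the sizes sum to `n`.  This is the number of plane overpartitions of `n`
with at most `k` rows. -/
noncomputable def plBar (k n : ℕ) : ℕ :=
  Nat.card {DP : (Fin k → Multiset ℕ) × (Fin k → Multiset ℕ) //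
    (∀ i, (DP.1 i).Nodup) ∧
    (∀ i, ∀ x ∈ DP.1 i, (i : ℕ) + 1 ≤ x) ∧
    (∀ i, ∀ x ∈ DP.2 i, (i : ℕ) + 1 ≤ x) ∧
    (∑ i, (DP.1 i).sum) + (∑ i, (DP.2 i).sum) = n}


open Finset

namespace S16

noncomputable def cnt (α : Type) (w : α → ℕ) (N : ℕ) : ℕ := Nat.card {a : α // w a = N}

lemma cnt_congr {α β : Type} (w : α → ℕ) (w' : β → ℕ) (e : α ≃ β)
    (h : ∀ a, w' (e a) = w a) (N : ℕ) : cnt α w N = cnt β w' N :=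
  Nat.card_congr (Equiv.subtypeEquiv e (fun a => by rw [h]))

/-- the sigma-decomposition bijection -/
def prodSliceFun {α β : Type} (w₁ : α → ℕ) (w₂ : β → ℕ) (N : ℕ)
    (x : Σ j : Fin (N+1), {a : α // w₁ a = j} × {b : β // w₂ b = N - j}) :
    {p : α × β // w₁ p.1 + w₂ p.2 = N} :=
  ⟨(x.2.1.1, x.2.2.1), by
    have h1 := x.2.1.2; have h2 := x.2.2.2; have h3 := x.1.isLt; simp only at h1 h2 ⊢; omega⟩

lemma prodSliceFun_bij {α β : Type} (w₁ : α → ℕ) (w₂ : β → ℕ) (N : ℕ) :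
    Function.Bijective (prodSliceFun w₁ w₂ N) := by
  constructor
  · rintro ⟨j, ⟨a, ha⟩, ⟨b, hb⟩⟩ ⟨j', ⟨a', ha'⟩, ⟨b', hb'⟩⟩ h
    simp only [prodSliceFun, Subtype.mk.injEq, Prod.mk.injEq] at h
    obtain ⟨h1, h2⟩ := h
    have hj : j = j' := Fin.ext (by rw [← ha, ← ha', h1])
    subst hj; subst h1; subst h2; rfl
  · rintro ⟨⟨a, b⟩, hp⟩
    simp only at hp
    refine ⟨⟨⟨w₁ a, by omega⟩, ⟨a, rfl⟩, ⟨b, ?_⟩⟩, rfl⟩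
    show w₂ b = N - w₁ a
    omega

lemma finite_add {α β : Type} (w₁ : α → ℕ) (w₂ : β → ℕ)
    (h₁ : ∀ j, Finite {a : α // w₁ a = j}) (h₂ : ∀ j, Finite {b : β // w₂ b = j}) (N : ℕ) :
    Finite {p : α × β // w₁ p.1 + w₂ p.2 = N} := by
  haveI := h₁; haveI := h₂
  exact Finite.of_surjective _ (prodSliceFun_bij w₁ w₂ N).2

lemma cnt_prod {α β : Type} (w₁ : α → ℕ) (w₂ : β → ℕ)
    (h₁ : ∀ j, Finite {a : α // w₁ a = j}) (h₂ : ∀ j, Finite {b : β // w₂ b = j}) (N : ℕ) :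
    cnt (α × β) (fun p => w₁ p.1 + w₂ p.2) N
      = ∑ j ∈ range (N+1), cnt α w₁ j * cnt β w₂ (N - j) := by
  haveI := h₁; haveI := h₂
  letI F1 : ∀ j : ℕ, Fintype {a : α // w₁ a = j} := fun j => Fintype.ofFinite _
  letI F2 : ∀ j : ℕ, Fintype {b : β // w₂ b = j} := fun j => Fintype.ofFinite _
  have e := Equiv.ofBijective _ (prodSliceFun_bij w₁ w₂ N)
  rw [cnt, Nat.card_congr e.symm, Nat.card_eq_fintype_card, Fintype.card_sigma]
  rw [← Fin.sum_univ_eq_sum_range (fun j => cnt α w₁ j * cnt β w₂ (N - j)) (N+1)]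
  refine Finset.sum_congr rfl (fun j _ => ?_)
  rw [Fintype.card_prod, cnt, cnt, Nat.card_eq_fintype_card, Nat.card_eq_fintype_card]

lemma cnt_scale {α : Type} (k : ℕ) (hk : k ≠ 0) (w : α → ℕ) (N : ℕ) :
    cnt α (fun a => k * w a) N = if k ∣ N then cnt α w (N / k) else 0 := by
  split_ifs with h
  · obtain ⟨c, rfl⟩ := h
    rw [Nat.mul_div_cancel_left c (Nat.pos_of_ne_zero hk)]
    exact Nat.card_congr (Equiv.subtypeEquiv (Equiv.refl α) (fun a => by
      simp only [Equiv.refl_apply]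
      exact Nat.mul_left_cancel_iff (Nat.pos_of_ne_zero hk)))
  · haveI : IsEmpty {a : α // k * w a = N} := ⟨fun a => h ⟨w a.1, a.2.symm⟩⟩
    exact Nat.card_of_isEmpty

lemma finite_scale {α : Type} (k : ℕ) (hk : k ≠ 0) (w : α → ℕ)
    (h : ∀ j, Finite {a : α // w a = j}) (N : ℕ) :
    Finite {a : α // k * w a = N} := by
  haveI := h
  refine Finite.of_injective (fun a => (⟨a.1, ?_⟩ : {a : α // w a = N / k}))
    (fun a b hab => Subtype.ext (by simpa using congrArg Subtype.val hab))
  have h2 := a.2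
  have : k * w a.1 / k = N / k := by rw [h2]
  rwa [Nat.mul_div_cancel_left _ (Nat.pos_of_ne_zero hk)] at this

end S16

namespace S16

lemma mem_le_sum {m : Multiset ℕ} {x : ℕ} (hx : x ∈ m) : x ≤ m.sum :=
  Multiset.single_le_sum (fun _ _ => Nat.zero_le _) x hx

lemma eq_zero_of_sum_eq_zero {m : Multiset ℕ} (h1 : ∀ x ∈ m, 1 ≤ x) (h : m.sum = 0) :
    m = 0 := by
  rw [Multiset.eq_zero_iff_forall_notMem]
  intro a ha
  have := h1 a ha
  have := (Multiset.sum_eq_zero_iff.mp h) a ha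
  omega

lemma count_mul_le_sum (m : Multiset ℕ) (x : ℕ) : m.count x * x ≤ m.sum := by
  have h : Multiset.replicate (m.count x) x ≤ m :=
    Multiset.le_count_iff_replicate_le.mp le_rfl
  have hs : (Multiset.replicate (m.count x) x).sum ≤ m.sum := by
    obtain ⟨u, hu⟩ := Multiset.le_iff_exists_add.mp h
    conv_rhs => rw [hu]
    rw [Multiset.sum_add]; omega
  rwa [Multiset.sum_replicate, smul_eq_mul] at hs

lemma finite_msets (N : ℕ) : {m : Multiset ℕ | (∀ x ∈ m, 1 ≤ x) ∧ m.sum ≤ N}.Finite := by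
  have hsub : {m : Multiset ℕ | (∀ x ∈ m, 1 ≤ x) ∧ m.sum ≤ N}
      ⊆ {m | m ≤ N • (Multiset.range (N+1))} := by
    rintro m ⟨h1, h2⟩
    simp only [Set.mem_setOf_eq]
    rw [Multiset.le_iff_count]
    intro x
    rw [Multiset.count_nsmul]
    by_cases hx : x ∈ m
    · have hx1 := h1 x hx
      have hxN : x ≤ N := le_trans (mem_le_sum hx) h2
      have hc := count_mul_le_sum m x
      have hcN : m.count x ≤ N := by nlinarith [Multiset.count_pos.mpr hx]
      have hmem : x ∈ Multiset.range (N+1) := by rw [Multiset.mem_range]; omega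
      have h1c : 1 ≤ (Multiset.range (N+1)).count x := Multiset.one_le_count_iff_mem.mpr hmem
      nlinarith
    · rw [Multiset.count_eq_zero_of_notMem hx]
      omega
  apply Set.Finite.subset _ hsub
  apply Set.Finite.ofFinset (N • (Multiset.range (N+1))).powerset.toFinset
  intro m
  simp [Multiset.mem_powerset]

/-- rows: pairs (D,P), D has no duplicates, all parts at least t+1 -/
def RowT (t : ℕ) : Type :=
  {r : Multiset ℕ × Multiset ℕ //
    r.1.Nodup ∧ (∀ x ∈ r.1, t + 1 ≤ x) ∧ (∀ x ∈ r.2, t + 1 ≤ x)}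

def rwt {t : ℕ} (r : RowT t) : ℕ := r.1.1.sum + r.1.2.sum

lemma finite_row (t N : ℕ) : Finite {r : RowT t // rwt r = N} := by
  haveI := (finite_msets N).to_subtype
  refine Finite.of_injective (fun r =>
    ((⟨r.1.1.1, ?_⟩, ⟨r.1.1.2, ?_⟩) :
      ({m : Multiset ℕ | (∀ x ∈ m, 1 ≤ x) ∧ m.sum ≤ N} ×
       {m : Multiset ℕ | (∀ x ∈ m, 1 ≤ x) ∧ m.sum ≤ N}))) ?_
  · exact ⟨fun x hx => le_trans (by omega) (r.1.2.2.1 x hx), by have := r.2; unfold rwt at this; omega⟩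
  · exact ⟨fun x hx => le_trans (by omega) (r.1.2.2.2 x hx), by have := r.2; unfold rwt at this; omega⟩
  · rintro ⟨⟨⟨D, P⟩, h⟩, hw⟩ ⟨⟨⟨D', P'⟩, h'⟩, hw'⟩ hab
    simp only [Prod.mk.injEq, Subtype.mk.injEq] at hab
    obtain ⟨h1, h2⟩ := hab
    subst h1; subst h2; rfl

lemma split_decomp (t : ℕ) (m : Multiset ℕ) (hm : ∀ x ∈ m, t + 1 ≤ x) :
    Multiset.replicate (m.count (t+1)) (t+1) + m.filter (fun x => t+2 ≤ x)
      = m.filter (fun x => ¬ t+2 ≤ x) + m.filter (fun x => t+2 ≤ x) := by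
  congr 1
  rw [← Multiset.filter_eq' m (t+1)]
  apply Multiset.filter_congr
  intro x hx
  constructor
  · rintro rfl; omega
  · intro h
    have := hm x hx
    omega

end S16

namespace S16

def wB (u : Bool × ℕ) : ℕ := (cond u.1 1 0) + u.2

lemma wB_le {u : Bool × ℕ} {N : ℕ} (h : wB u = N) : u.2 < N + 1 := by
  unfold wB at h; cases hb : u.1 <;> rw [hb] at h <;> simp at h <;> omega

lemma finite_wB (N : ℕ) : Finite {u : Bool × ℕ // wB u = N} := by
  refine Finite.of_injective
    (fun u => ((u.1.1, ⟨u.1.2, wB_le u.2⟩) : Bool × Fin (N+1))) ?_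
  rintro ⟨⟨b, c⟩, h⟩ ⟨⟨b', c'⟩, h'⟩ hab
  simp only [Prod.mk.injEq, Fin.mk.injEq] at hab
  obtain ⟨h1, h2⟩ := hab
  subst h1; subst h2; rfl

lemma split_full (t : ℕ) (m : Multiset ℕ) (hm : ∀ x ∈ m, t + 1 ≤ x) :
    Multiset.replicate (m.count (t+1)) (t+1) + m.filter (fun x => t+2 ≤ x) = m := by
  rw [split_decomp t m hm]
  rw [add_comm]
  exact Multiset.filter_add_not _ m

def splitEquiv (t : ℕ) : RowT t ≃ (Bool × ℕ) × RowT (t+1) where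
  toFun r := ((decide ((t+1) ∈ r.1.1), r.1.2.count (t+1)),
    ⟨(r.1.1.filter (fun x => t+2 ≤ x), r.1.2.filter (fun x => t+2 ≤ x)),
      r.2.1.filter _,
      fun x hx => by have := Multiset.of_mem_filter hx; omega,
      fun x hx => by have := Multiset.of_mem_filter hx; omega⟩)
  invFun x := ⟨((cond x.1.1 {t+1} 0) + x.2.1.1, Multiset.replicate x.1.2 (t+1) + x.2.1.2),
    by
      rcases x with ⟨⟨b, c⟩, ⟨⟨D, P⟩, hD, hD2, hP2⟩⟩
      cases b
      · simpa using hD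
      · simp only [cond_true, Multiset.singleton_add]
        exact Multiset.nodup_cons.mpr ⟨fun hmem => by have := hD2 _ hmem; omega, hD⟩,
    by
      rcases x with ⟨⟨b, c⟩, ⟨⟨D, P⟩, hD, hD2, hP2⟩⟩
      intro y hy
      rcases Multiset.mem_add.mp hy with h | h
      · cases b
        · simp at h
        · simp only [cond_true, Multiset.mem_singleton] at h; omega
      · have := hD2 y h; omega,
    by
      rcases x with ⟨⟨b, c⟩, ⟨⟨D, P⟩, hD, hD2, hP2⟩⟩
      intro y hy
      rcases Multiset.mem_add.mp hy with h | h
      · rw [Multiset.eq_of_mem_replicate h]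
      · have := hP2 y h; omega⟩
  left_inv := by
    rintro ⟨⟨D, P⟩, hD, hD2, hP2⟩
    apply Subtype.ext
    simp only [Prod.mk.injEq]
    constructor
    · have hc : (cond (decide ((t+1) ∈ D)) ({t+1} : Multiset ℕ) 0)
          = Multiset.replicate (D.count (t+1)) (t+1) := by
        by_cases hmem : (t+1) ∈ D
        · have h1 : D.count (t+1) = 1 := le_antisymm
            (Multiset.nodup_iff_count_le_one.mp hD _) (Multiset.one_le_count_iff_mem.mpr hmem)
          simp [hmem, h1]
        · simp [hmem, Multiset.count_eq_zero_of_notMem hmem]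
      rw [hc, split_full t D hD2]
    · rw [split_full t P hP2]
  right_inv := by
    rintro ⟨⟨b, c⟩, ⟨⟨D, P⟩, hD, hD2, hP2⟩⟩
    have hDn : (t+1) ∉ D := fun hmem => by have := hD2 _ hmem; omega
    have hPn : (t+1) ∉ P := fun hmem => by have := hP2 _ hmem; omega
    dsimp only
    refine Prod.ext (Prod.ext ?_ ?_) (Subtype.ext (Prod.ext ?_ ?_))
    · cases b
      · simp [hDn]
      · simp [Multiset.singleton_add, Multiset.mem_cons]
    · rw [Multiset.count_add, Multiset.count_replicate_self,
        Multiset.count_eq_zero_of_notMem hPn, add_zero]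
    · show Multiset.filter (fun x => t+2 ≤ x) ((cond b {t+1} 0) + D) = D
      rw [Multiset.filter_add]
      have h1 : Multiset.filter (fun x => t+2 ≤ x) (cond b {t+1} 0) = 0 := by
        cases b
        · simp
        · rw [cond_true, Multiset.filter_singleton, if_neg (by omega)]; rfl
      have h2 : Multiset.filter (fun x => t+2 ≤ x) D = D :=
        Multiset.filter_eq_self.mpr (fun x hx => by have := hD2 x hx; omega)
      rw [h1, h2, zero_add]
    · show Multiset.filter (fun x => t+2 ≤ x) (Multiset.replicate c (t+1) + P) = P
      rw [Multiset.filter_add]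
      have h1 : Multiset.filter (fun x => t+2 ≤ x) (Multiset.replicate c (t+1)) = 0 := by
        rw [Multiset.filter_eq_nil]
        intro y hy
        rw [Multiset.eq_of_mem_replicate hy]
        omega
      have h2 : Multiset.filter (fun x => t+2 ≤ x) P = P :=
        Multiset.filter_eq_self.mpr (fun x hx => by have := hP2 x hx; omega)
      rw [h1, h2, zero_add]

lemma splitEquiv_weight (t : ℕ) (r : RowT t) :
    rwt r = (t+1) * wB ((splitEquiv t r).1) + rwt ((splitEquiv t r).2) := by
  rcases r with ⟨⟨D, P⟩, hD, hD2, hP2⟩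
  have hDsum : D.sum = D.count (t+1) * (t+1) + (D.filter (fun x => t+2 ≤ x)).sum := by
    conv_lhs => rw [← split_full t D hD2]
    rw [Multiset.sum_add, Multiset.sum_replicate, smul_eq_mul]
  have hPsum : P.sum = P.count (t+1) * (t+1) + (P.filter (fun x => t+2 ≤ x)).sum := by
    conv_lhs => rw [← split_full t P hP2]
    rw [Multiset.sum_add, Multiset.sum_replicate, smul_eq_mul]
  have hcount : D.count (t+1) = cond (decide ((t+1) ∈ D)) 1 0 := by
    by_cases hmem : (t+1) ∈ D
    · simp [hmem, le_antisymm (Multiset.nodup_iff_count_le_one.mp hD _)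
        (Multiset.one_le_count_iff_mem.mpr hmem)]
    · simp [hmem, Multiset.count_eq_zero_of_notMem hmem]
  show D.sum + P.sum = (t+1) * wB (decide ((t+1) ∈ D), P.count (t+1))
      + ((D.filter (fun x => t+2 ≤ x)).sum + (P.filter (fun x => t+2 ≤ x)).sum)
  unfold wB
  rw [hDsum, hPsum, hcount]
  ring

end S16

namespace S16

abbrev U := Bool × ℕ
def Pr (t : ℕ) : Type := RowT t × RowT t
def wPr {t : ℕ} (p : Pr t) : ℕ := rwt p.1 + rwt p.2

noncomputable def cB (N : ℕ) : ℕ := cnt U wB N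
noncomputable def cF (N : ℕ) : ℕ := cnt (U × U) (fun p => wB p.1 + wB p.2) N
noncomputable def cM (t r : ℕ) : ℕ := cnt (Pr t) wPr r

lemma cB_zero : cB 0 = 1 := by
  haveI : Unique {u : U // wB u = 0} := by
    refine ⟨⟨⟨(false, 0), rfl⟩⟩, ?_⟩
    rintro ⟨⟨b, c⟩, h⟩
    unfold wB at h
    cases b
    · simp only [cond_false, zero_add] at h
      subst h; rfl
    · simp at h
  exact Nat.card_unique

lemma cB_succ (N : ℕ) : cB (N+1) = 2 := by
  have e : {u : U // wB u = N+1} ≃ Bool := by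
    refine ⟨fun u => u.1.1, fun b => ⟨(b, N+1 - cond b 1 0), by cases b <;> simp [wB] <;> omega⟩, ?_, ?_⟩
    · rintro ⟨⟨b, c⟩, h⟩
      apply Subtype.ext
      unfold wB at h
      cases b
      · simp only [cond_false, zero_add] at h ⊢
        simp [h]
      · simp only [cond_true] at h ⊢
        simp; omega
    · intro b; rfl
  rw [cB, cnt, Nat.card_congr e, Nat.card_eq_fintype_card, Fintype.card_bool]

lemma mset_zero {t : ℕ} {m : Multiset ℕ} (hb : ∀ x ∈ m, t + 1 ≤ x) (hs : m.sum ≤ t) :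
    m = 0 := by
  rw [Multiset.eq_zero_iff_forall_notMem]
  intro a ha
  have := hb a ha
  have := mem_le_sum ha
  omega

lemma cM_zero (t : ℕ) : cM t 0 = 1 := by
  haveI : Unique {p : Pr t // wPr p = 0} := by
    refine ⟨⟨⟨(⟨(0, 0), by simp⟩, ⟨(0, 0), by simp⟩), rfl⟩⟩, ?_⟩
    rintro ⟨⟨⟨⟨D1, P1⟩, hn1, hb1, hc1⟩, ⟨⟨D2, P2⟩, hn2, hb2, hc2⟩⟩, hw⟩
    unfold wPr rwt at hw
    simp only at hw
    have e1 : D1 = 0 := eq_zero_of_sum_eq_zero (fun x hx => by have := hb1 x hx; omega) (by omega)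
    have e2 : P1 = 0 := eq_zero_of_sum_eq_zero (fun x hx => by have := hc1 x hx; omega) (by omega)
    have e3 : D2 = 0 := eq_zero_of_sum_eq_zero (fun x hx => by have := hb2 x hx; omega) (by omega)
    have e4 : P2 = 0 := eq_zero_of_sum_eq_zero (fun x hx => by have := hc2 x hx; omega) (by omega)
    subst e1; subst e2; subst e3; subst e4; rfl
  exact Nat.card_unique

lemma cM_lt {t r : ℕ} (h1 : 1 ≤ r) (h2 : r ≤ t) : cM t r = 0 := by
  haveI : IsEmpty {p : Pr t // wPr p = r} := by
    refine ⟨?_⟩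
    rintro ⟨⟨⟨⟨D1, P1⟩, hn1, hb1, hc1⟩, ⟨⟨D2, P2⟩, hn2, hb2, hc2⟩⟩, hw⟩
    unfold wPr rwt at hw
    simp only at hw
    have e1 : D1 = 0 := mset_zero (fun x hx => hb1 x hx) (by omega)
    have e2 : P1 = 0 := mset_zero (fun x hx => hc1 x hx) (by omega)
    have e3 : D2 = 0 := mset_zero (fun x hx => hb2 x hx) (by omega)
    have e4 : P2 = 0 := mset_zero (fun x hx => hc2 x hx) (by omega)
    subst e1; subst e2; subst e3; subst e4
    simp at hw
    omega
  exact Nat.card_of_isEmpty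

lemma cF_sum (N : ℕ) : cF N = ∑ j ∈ Finset.range (N+1), cB j * cB (N - j) :=
  cnt_prod wB wB finite_wB finite_wB N

lemma cF_zero : cF 0 = 1 := by
  rw [cF_sum]
  simp [cB_zero]

lemma cF_dvd (w : ℕ) : 4 ∣ cF (w+1) := by
  rw [cF_sum, Finset.sum_range_succ, Finset.sum_range_succ']
  have hmid : ∀ i ∈ Finset.range w, cB (i+1) * cB (w+1 - (i+1)) = 4 := by
    intro i hi
    rw [Finset.mem_range] at hi
    obtain ⟨k, hk⟩ : ∃ k, w+1 - (i+1) = k+1 := ⟨w - i - 1, by omega⟩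
    rw [cB_succ, hk, cB_succ]
  rw [Finset.sum_congr rfl hmid, Finset.sum_const, Finset.card_range, smul_eq_mul]
  have h0 : cB 0 * cB (w+1-0) = 2 := by
    rw [Nat.sub_zero, cB_zero, cB_succ]
  have h1 : cB (w+1) * cB (w+1-(w+1)) = 2 := by
    rw [Nat.sub_self, cB_zero, cB_succ]
  rw [h0, h1]
  omega

end S16

namespace S16

def pairSplit (t : ℕ) : Pr t ≃ (U × U) × Pr (t+1) :=
  (Equiv.prodCongr (splitEquiv t) (splitEquiv t)).trans (Equiv.prodProdProdComm _ _ _ _)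

lemma cM_rec (t r : ℕ) : cM t r
    = ∑ j ∈ Finset.range (r+1),
        (if (t+1) ∣ j then cF (j/(t+1)) else 0) * cM (t+1) (r - j) := by
  have hw : ∀ p : Pr t,
      (fun x : (U × U) × Pr (t+1) => (t+1) * (wB x.1.1 + wB x.1.2) + wPr x.2) (pairSplit t p)
        = wPr p := by
    intro p
    obtain ⟨r1, r2⟩ := p
    have h1 := splitEquiv_weight t r1
    have h2 := splitEquiv_weight t r2
    show (t+1) * (wB ((splitEquiv t) r1).1 + wB ((splitEquiv t) r2).1)
        + (rwt ((splitEquiv t) r1).2 + rwt ((splitEquiv t) r2).2) = wPr (r1, r2)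
    unfold wPr
    simp only
    rw [h1, h2]
    ring
  rw [cM, cnt_congr wPr
    (fun x : (U × U) × Pr (t+1) => (t+1) * (wB x.1.1 + wB x.1.2) + wPr x.2) (pairSplit t) hw]
  have := cnt_prod (fun q : U × U => (t+1) * (wB q.1 + wB q.2)) (wPr (t := t+1))
    (fun j => finite_scale (t+1) (by omega) _ (finite_add wB wB finite_wB finite_wB) j)
    (fun j => finite_add rwt rwt (finite_row (t+1)) (finite_row (t+1)) j) r
  rw [this]
  refine Finset.sum_congr rfl (fun j _ => ?_)
  rw [cnt_scale (t+1) (by omega) _ j]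
  rfl

lemma cM_dvd_aux (r : ℕ) (hr : 1 ≤ r) : ∀ d t, r ≤ t + d → 4 ∣ cM t r := by
  intro d
  induction d with
  | zero =>
    intro t ht
    rw [cM_lt hr (by omega)]
    exact dvd_zero 4
  | succ d ih =>
    intro t ht
    rcases le_or_gt r t with h | h
    · rw [cM_lt hr h]
      exact dvd_zero 4
    · rw [cM_rec]
      refine Finset.dvd_sum (fun j hj => ?_)
      rcases Nat.eq_zero_or_pos j with rfl | hjpos
      · rw [if_pos (dvd_zero _), Nat.zero_div, cF_zero, one_mul]
        exact ih (t+1) (by omega)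
      · split_ifs with hdvd
        · obtain ⟨k, hk⟩ : ∃ k, j / (t+1) = k + 1 := by
            obtain ⟨c, rfl⟩ := hdvd
            have hc : c ≠ 0 := by rintro rfl; simp at hjpos
            rw [Nat.mul_div_cancel_left c (by omega)]
            exact ⟨c - 1, by omega⟩
          rw [hk]
          exact Dvd.dvd.mul_right (cF_dvd k) _
        · simp

lemma cM_dvd {t r : ℕ} (hr : 1 ≤ r) : 4 ∣ cM t r :=
  cM_dvd_aux r hr r t (by omega)

end S16

namespace S16

def wUV (u : U × U) : ℕ := wB u.1 + 3 * wB u.2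
noncomputable def hf (r : ℕ) : ℕ := cnt (U × U) wUV r

lemma hf_sum (r : ℕ) : hf r
    = ∑ a ∈ Finset.range (r+1), cB a * (if 3 ∣ (r - a) then cB ((r - a)/3) else 0) := by
  have h := cnt_prod wB (fun v => 3 * wB v)
    (fun j => finite_wB j) (fun j => finite_scale 3 (by omega) wB finite_wB j) r
  have h2 : hf r = ∑ j ∈ Finset.range (r+1), cB j * cnt U (fun v => 3 * wB v) (r - j) := h
  rw [h2]
  refine Finset.sum_congr rfl (fun a _ => ?_)
  rw [cnt_scale 3 (by omega) wB]
  rfl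

lemma cB_of_dvd_pos {x : ℕ} (hx : 1 ≤ x) (h3 : 3 ∣ x) : cB (x/3) = 2 := by
  obtain ⟨c, rfl⟩ := h3
  have hc : c ≠ 0 := by rintro rfl; omega
  rw [Nat.mul_div_cancel_left c (by omega)]
  obtain ⟨k, rfl⟩ : ∃ k, c = k + 1 := ⟨c - 1, by omega⟩
  exact cB_succ k

lemma hf_form (s : ℕ) : ∃ A, hf (s+1) = 4*A + (if 3 ∣ (s+1) then 2 else 0) + 2 := by
  rw [hf_sum, Finset.sum_range_succ, Finset.sum_range_succ']
  have hlast : cB (s+1) * (if 3 ∣ (s+1-(s+1)) then cB ((s+1-(s+1))/3) else 0) = 2 := by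
    rw [Nat.sub_self]
    simp [cB_succ, cB_zero]
  have h0 : cB 0 * (if 3 ∣ (s+1-0) then cB ((s+1-0)/3) else 0)
      = if 3 ∣ (s+1) then 2 else 0 := by
    rw [cB_zero, one_mul, Nat.sub_zero]
    split_ifs with h3
    · exact cB_of_dvd_pos (by omega) h3
    · rfl
  have hmid : ∀ i ∈ Finset.range s,
      cB (i+1) * (if 3 ∣ (s+1-(i+1)) then cB ((s+1-(i+1))/3) else 0)
        = if 3 ∣ (s-i) then 4 else 0 := by
    intro i hi
    rw [Finset.mem_range] at hi
    have he : s+1-(i+1) = s-i := by omega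
    rw [he, cB_succ]
    split_ifs with h3
    · rw [cB_of_dvd_pos (by omega) h3]
    · ring
  rw [hlast, h0, Finset.sum_congr rfl hmid]
  refine ⟨∑ i ∈ Finset.range s, if 3 ∣ (s-i) then 1 else 0, ?_⟩
  have : ∑ i ∈ Finset.range s, (if 3 ∣ (s-i) then 4 else 0)
      = 4 * ∑ i ∈ Finset.range s, (if 3 ∣ (s-i) then 1 else 0) := by
    rw [Finset.mul_sum]
    refine Finset.sum_congr rfl (fun i _ => ?_)
    split_ifs <;> ring
  omega

lemma K_dvd (m : ℕ) : 4 ∣ hf (m+1) + hf (m+2) + hf (m+3) := by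
  obtain ⟨A1, h1⟩ := hf_form m
  obtain ⟨A2, h2⟩ := hf_form (m+1)
  obtain ⟨A3, h3⟩ := hf_form (m+2)
  have htri : (3 ∣ m+1 ∧ ¬3 ∣ m+2 ∧ ¬3 ∣ m+3) ∨ (¬3 ∣ m+1 ∧ 3 ∣ m+2 ∧ ¬3 ∣ m+3)
      ∨ (¬3 ∣ m+1 ∧ ¬3 ∣ m+2 ∧ 3 ∣ m+3) := by omega
  have e2 : m+1+1 = m+2 := by omega
  have e3 : m+2+1 = m+3 := by omega
  rw [e2] at h2; rw [e3] at h3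
  rcases htri with ⟨a,b,c⟩ | ⟨a,b,c⟩ | ⟨a,b,c⟩
  · rw [if_pos a] at h1; rw [if_neg b] at h2; rw [if_neg c] at h3; omega
  · rw [if_neg a] at h1; rw [if_pos b] at h2; rw [if_neg c] at h3; omega
  · rw [if_neg a] at h1; rw [if_neg b] at h2; rw [if_pos c] at h3; omega

def wPB (p : Pr 1 × Pr 3) : ℕ := wPr p.1 + wPr p.2
noncomputable def Cf (s : ℕ) : ℕ := cnt (Pr 1 × Pr 3) wPB s

lemma finite_Pr (t : ℕ) (j : ℕ) : Finite {p : Pr t // wPr p = j} :=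
  finite_add rwt rwt (finite_row t) (finite_row t) j

lemma Cf_sum (s : ℕ) : Cf s = ∑ y ∈ Finset.range (s+1), cM 1 y * cM 3 (s - y) :=
  cnt_prod wPr wPr (finite_Pr 1) (finite_Pr 3) s

lemma Cf_zero : Cf 0 = 1 := by
  rw [Cf_sum]
  simp [cM_zero]

lemma Cf_dvd {s : ℕ} (hs : 1 ≤ s) : 4 ∣ Cf s := by
  rw [Cf_sum]
  refine Finset.dvd_sum (fun y hy => ?_)
  rcases Nat.eq_zero_or_pos y with rfl | hypos
  · rw [cM_zero, one_mul, Nat.sub_zero]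
    exact cM_dvd hs
  · exact Dvd.dvd.mul_right (cM_dvd hypos) _

end S16

namespace S16

def T4 : Type := RowT 0 × RowT 1 × RowT 2 × RowT 3
def wT4 (x : T4) : ℕ := rwt x.1 + (rwt x.2.1 + (rwt x.2.2.1 + rwt x.2.2.2))

def plEquiv (N : ℕ) :
    {DP : (Fin 4 → Multiset ℕ) × (Fin 4 → Multiset ℕ) //
      (∀ i, (DP.1 i).Nodup) ∧
      (∀ i, ∀ x ∈ DP.1 i, (i : ℕ) + 1 ≤ x) ∧
      (∀ i, ∀ x ∈ DP.2 i, (i : ℕ) + 1 ≤ x) ∧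
      (∑ i, (DP.1 i).sum) + (∑ i, (DP.2 i).sum) = N}
    ≃ {x : T4 // wT4 x = N} where
  toFun DP :=
    ⟨(⟨(DP.1.1 0, DP.1.2 0), DP.2.1 0, DP.2.2.1 0, DP.2.2.2.1 0⟩,
      ⟨(DP.1.1 1, DP.1.2 1), DP.2.1 1, DP.2.2.1 1, DP.2.2.2.1 1⟩,
      ⟨(DP.1.1 2, DP.1.2 2), DP.2.1 2, DP.2.2.1 2, DP.2.2.2.1 2⟩,
      ⟨(DP.1.1 3, DP.1.2 3), DP.2.1 3, DP.2.2.1 3, DP.2.2.2.1 3⟩), by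
      have h := DP.2.2.2.2
      rw [Fin.sum_univ_four, Fin.sum_univ_four] at h
      unfold wT4 rwt
      simp only
      omega⟩
  invFun x :=
    ⟨(![x.1.1.1.1, x.1.2.1.1.1, x.1.2.2.1.1.1, x.1.2.2.2.1.1],
      ![x.1.1.1.2, x.1.2.1.1.2, x.1.2.2.1.1.2, x.1.2.2.2.1.2]), by
      obtain ⟨⟨⟨⟨D0, P0⟩, n0, b0, c0⟩, ⟨⟨D1, P1⟩, n1, b1, c1⟩,
        ⟨⟨D2, P2⟩, n2, b2, c2⟩, ⟨⟨D3, P3⟩, n3, b3, c3⟩⟩, hw⟩ := x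
      unfold wT4 rwt at hw
      simp only at hw ⊢
      refine ⟨?_, ?_, ?_, ?_⟩
      · intro i; fin_cases i <;> assumption
      · intro i; fin_cases i <;> intro y hy <;> simp only at hy
        · exact b0 y hy
        · exact b1 y hy
        · exact b2 y hy
        · exact b3 y hy
      · intro i; fin_cases i <;> intro y hy <;> simp only at hy
        · exact c0 y hy
        · exact c1 y hy
        · exact c2 y hy
        · exact c3 y hy
      · rw [Fin.sum_univ_four, Fin.sum_univ_four]
        show D0.sum + D1.sum + D2.sum + D3.sum + (P0.sum + P1.sum + P2.sum + P3.sum) = N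
        omega⟩
  left_inv := by
    rintro ⟨⟨D, P⟩, h⟩
    apply Subtype.ext
    simp only
    refine Prod.ext ?_ ?_ <;> funext i <;> fin_cases i <;> rfl
  right_inv := by
    rintro ⟨⟨⟨⟨D0, P0⟩, h0⟩, ⟨⟨D1, P1⟩, h1⟩, ⟨⟨D2, P2⟩, h2⟩, ⟨⟨D3, P3⟩, h3⟩⟩, hw⟩
    rfl

def Big : Type := (U × U) × (Pr 1 × Pr 3)
def wBig (x : Big) : ℕ := wUV x.1 + wPB x.2

def bigEquiv : T4 ≃ Big where
  toFun x := (((splitEquiv 0 x.1).1, (splitEquiv 2 x.2.2.1).1),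
    (((splitEquiv 0 x.1).2, x.2.1), ((splitEquiv 2 x.2.2.1).2, x.2.2.2)))
  invFun y := ((splitEquiv 0).symm (y.1.1, y.2.1.1),
    (y.2.1.2, ((splitEquiv 2).symm (y.1.2, y.2.2.1), y.2.2.2)))
  left_inv := by
    rintro ⟨a, b, c, d⟩
    simp only [Prod.mk.eta, Equiv.symm_apply_apply]
    rfl
  right_inv := by
    rintro ⟨⟨u, v⟩, ⟨y1, y2⟩, ⟨z1, z2⟩⟩
    simp only [Prod.mk.eta, Equiv.apply_symm_apply]
    rfl

lemma bigEquiv_weight (x : T4) : wBig (bigEquiv x) = wT4 x := by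
  obtain ⟨a, b, c, d⟩ := x
  have h1 := splitEquiv_weight 0 a
  have h2 := splitEquiv_weight 2 c
  show wUV ((splitEquiv 0 a).1, (splitEquiv 2 c).1)
      + wPB (((splitEquiv 0 a).2, b), ((splitEquiv 2 c).2, d)) = wT4 (a, b, c, d)
  unfold wUV wPB wPr wT4
  simp only
  omega

lemma plBar_eq (N : ℕ) : plBar 4 N = ∑ s ∈ Finset.range (N+1), hf (N - s) * Cf s := by
  have step1 : plBar 4 N = cnt T4 wT4 N := Nat.card_congr (plEquiv N)
  have step2 : cnt T4 wT4 N = cnt Big wBig N :=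
    cnt_congr wT4 wBig bigEquiv (fun x => bigEquiv_weight x) N
  have step3 : cnt Big wBig N = ∑ j ∈ Finset.range (N+1), hf j * Cf (N - j) := by
    have h := cnt_prod wUV wPB
      (fun j => finite_add wB (fun v => 3 * wB v) finite_wB
        (fun i => finite_scale 3 (by omega) wB finite_wB i) j)
      (fun j => finite_add wPr wPr (finite_Pr 1) (finite_Pr 3) j) N
    exact h
  have step4 : ∑ j ∈ Finset.range (N+1), hf j * Cf (N - j)
      = ∑ s ∈ Finset.range (N+1), hf (N - s) * Cf s := by
    rw [← Finset.sum_range_reflect (fun j => hf j * Cf (N - j)) (N+1)]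
    refine Finset.sum_congr rfl (fun s hs => ?_)
    rw [Finset.mem_range] at hs
    congr 1 <;> congr 1 <;> omega
  rw [step1, step2, step3, step4]

end S16

theorem stmt16 : ∀ n : ℕ,
    plBar 4 (4 * n + 1) + plBar 4 (4 * n + 2) + plBar 4 (4 * n + 3) ≡ 0 [MOD 4] := by
  intro n
  refine (Nat.modEq_zero_iff_dvd).mpr ?_
  have ext : ∀ N, N < 4*n+4 → plBar 4 N
      = ∑ s ∈ Finset.range (4*n+4), (if s ≤ N then S16.hf (N-s) else 0) * S16.Cf s := by
    intro N hN
    have h1 : ∑ s ∈ Finset.range (N+1), S16.hf (N-s) * S16.Cf s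
        = ∑ s ∈ Finset.range (N+1), (if s ≤ N then S16.hf (N-s) else 0) * S16.Cf s :=
      Finset.sum_congr rfl (fun s hs => by
        rw [Finset.mem_range] at hs; rw [if_pos (by omega)])
    rw [S16.plBar_eq, h1]
    exact Finset.sum_subset (Finset.range_subset_range.mpr (by omega))
      (fun x hx hnx => by
        rw [Finset.mem_range, not_lt] at hnx
        rw [if_neg (by omega), zero_mul])
  rw [ext (4*n+1) (by omega), ext (4*n+2) (by omega), ext (4*n+3) (by omega),
    ← Finset.sum_add_distrib, ← Finset.sum_add_distrib]
  refine Finset.dvd_sum (fun s hs => ?_)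
  rw [Finset.mem_range] at hs
  rcases le_or_gt s (4*n) with h | h
  · rw [if_pos (by omega), if_pos (by omega), if_pos (by omega)]
    have e1 : 4*n+1-s = (4*n-s)+1 := by omega
    have e2 : 4*n+2-s = (4*n-s)+2 := by omega
    have e3 : 4*n+3-s = (4*n-s)+3 := by omega
    rw [e1, e2, e3, ← add_mul, ← add_mul]
    exact Dvd.dvd.mul_right (S16.K_dvd (4*n-s)) _
  · have hc : 4 ∣ S16.Cf s := S16.Cf_dvd (by omega)
    exact dvd_add (dvd_add (Dvd.dvd.mul_left hc _) (Dvd.dvd.mul_left hc _))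
      (Dvd.dvd.mul_left hc _)
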